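/- Fix n, m : ℕ, let R be a finite list of words in n generators defining G = PresentedGroup S, and let R' be a finite list of words in m generators defining G' = PresentedGroup S'. Let u : Fin n → List (Fin m × Bool) be a family of words and let f : G →* G' be a group homomorphism sending, for each i, the image in G of the i-th generator to the element of G' represented by u i. Suppose f admits a left inverse, i.e. there is a homomorphism g : G' →* G with g (f x) = x for all x ∈ G. If the uniform membership problem for G' is decidable — i.e. ComputablePred holds for the predicate on pairs (Y, v) of a list of words and a word in m generators asserting that the element of G' represented by v lies in Subgroup.closure of the set of elements represented by Y — then the uniform membership problem for G is decidable in the same sense (for lists of words and words in n generators). -/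

import Mathlib

/-- The set of relators in the free group determined by a list of words. -/
def relsOf {α : Type} (R : List (List (α × Bool))) : Set (FreeGroup α) :=
  {x | ∃ r ∈ R, x = FreeGroup.mk r}

/-- The element of the presented group represented by a word. -/
def wordElt {α : Type} (R : List (List (α × Bool))) (w : List (α × Bool)) :
    PresentedGroup (relsOf R) :=
  PresentedGroup.mk (relsOf R) (FreeGroup.mk w)

theorem wordElt_append {α : Type} (R : List (List (α × Bool))) (a b : List (α × Bool)) :
    wordElt R (a ++ b) = wordElt R a * wordElt R b := by
  unfold wordElt
  rw [← FreeGroup.mul_mk, map_mul]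

set_option maxHeartbeats 1000000 in
/-- If `G` embeds in `G'` as a retract (via an explicitly given homomorphism on
generators) and the uniform membership problem for `G'` is decidable, then the uniform
membership problem for `G` is decidable. -/
theorem membership_problem_of_retract (n m : ℕ)
    (R : List (List (Fin n × Bool))) (R' : List (List (Fin m × Bool)))
    (u : Fin n → List (Fin m × Bool))
    (f : PresentedGroup (relsOf R) →* PresentedGroup (relsOf R'))
    (hf : ∀ i : Fin n, f (PresentedGroup.of i) = wordElt R' (u i))
    (g : PresentedGroup (relsOf R') →* PresentedGroup (relsOf R))
    (hg : ∀ x, g (f x) = x)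
    (hmp' : ComputablePred fun p : List (List (Fin m × Bool)) × List (Fin m × Bool) =>
      wordElt R' p.2 ∈ Subgroup.closure {x | ∃ v ∈ p.1, x = wordElt R' v}) :
    ComputablePred fun p : List (List (Fin n × Bool)) × List (Fin n × Bool) =>
      wordElt R p.2 ∈ Subgroup.closure {x | ∃ v ∈ p.1, x = wordElt R v} := by
  classical
  -- the word-level translation
  set h : Fin n × Bool → List (Fin m × Bool) :=
    fun q => cond q.2 (u q.1) (FreeGroup.invRev (u q.1)) with hh
  set T : List (Fin n × Bool) → List (Fin m × Bool) :=
    fun w => (w.map h).flatten with hT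
  -- f translates words via T
  have fT : ∀ w : List (Fin n × Bool), f (wordElt R w) = wordElt R' (T w) := by
    intro w
    induction w with
    | nil =>
      show f (wordElt R []) = wordElt R' []
      have : wordElt R [] = 1 := by
        unfold wordElt
        rw [← FreeGroup.one_eq_mk, map_one]
      rw [this, map_one]
      unfold wordElt
      rw [← FreeGroup.one_eq_mk, map_one]
    | cons q w ih =>
      have h1 : wordElt R (q :: w) = wordElt R [q] * wordElt R w := by
        simpa using wordElt_append R [q] w
      have h2 : T (q :: w) = h q ++ T w := by simp [hT]
      have h3 : f (wordElt R [q]) = wordElt R' (h q) := by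
        rcases q with ⟨i, b⟩
        cases b with
        | true =>
          have : wordElt R [(i, true)] = PresentedGroup.of i := rfl
          rw [this, hf]
          rfl
        | false =>
          have : wordElt R [(i, false)] = (PresentedGroup.of (rels := relsOf R) i)⁻¹ := by
            unfold wordElt
            have : FreeGroup.mk [(i, false)] = (FreeGroup.of i)⁻¹ := by
              rw [show FreeGroup.of i = FreeGroup.mk [(i, true)] from rfl,
                FreeGroup.inv_mk]
              simp [FreeGroup.invRev]
            rw [this, map_inv]
            rfl
          rw [this, map_inv, hf]
          show (wordElt R' (u i))⁻¹ = wordElt R' (FreeGroup.invRev (u i))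
          unfold wordElt
          rw [← FreeGroup.inv_mk, map_inv]
      rw [h1, map_mul, h3, ih, h2, wordElt_append]
  -- the key equivalence
  have key : ∀ p : List (List (Fin n × Bool)) × List (Fin n × Bool),
      (wordElt R p.2 ∈ Subgroup.closure {x | ∃ v ∈ p.1, x = wordElt R v}) ↔
      (wordElt R' (T p.2) ∈
        Subgroup.closure {x | ∃ v ∈ p.1.map T, x = wordElt R' v}) := by
    intro p
    constructor
    · intro hx
      rw [← fT]
      have := Subgroup.mem_map_of_mem f hx
      rw [MonoidHom.map_closure] at this
      refine Subgroup.closure_mono ?_ this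
      rintro _ ⟨y, ⟨v, hv, rfl⟩, rfl⟩
      exact ⟨T v, List.mem_map_of_mem (f := T) hv, fT v⟩
    · intro hx
      have hgx : g (wordElt R' (T p.2)) = wordElt R p.2 := by
        rw [← fT, hg]
      rw [← hgx]
      have := Subgroup.mem_map_of_mem g hx
      rw [MonoidHom.map_closure] at this
      refine Subgroup.closure_mono ?_ this
      rintro _ ⟨y, ⟨v', hv', rfl⟩, rfl⟩
      rcases List.mem_map.1 hv' with ⟨v, hv, rfl⟩
      refine ⟨v, hv, ?_⟩
      rw [← fT, hg]
  -- computability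
  obtain ⟨c, hc, hcp⟩ := ComputablePred.computable_iff.1 hmp'
  have Tp : Primrec T := by
    have : Primrec₂ (fun (_ : List (Fin n × Bool)) (q : Fin n × Bool) => h q) :=
      ((Primrec.dom_finite h).comp Primrec.snd).to₂
    exact Primrec.list_flatten.comp (Primrec.list_map Primrec.id this)
  have trP : Primrec (fun p : List (List (Fin n × Bool)) × List (Fin n × Bool) =>
      ((p.1.map T, T p.2) : List (List (Fin m × Bool)) × List (Fin m × Bool))) := by
    refine Primrec.pair ?_ (Tp.comp Primrec.snd)
    exact Primrec.list_map Primrec.fst ((Tp.comp Primrec.snd).to₂)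
  have hcomp : Computable (fun p : List (List (Fin n × Bool)) × List (Fin n × Bool) =>
      c (p.1.map T, T p.2)) := hc.comp trP.to_comp
  refine ComputablePred.computable_iff.2 ⟨_, hcomp, ?_⟩
  funext p
  exact propext ((key p).trans (iff_of_eq (congrFun hcp (p.1.map T, T p.2))))
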